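/- Let G be a graph, A a set of at most k non-edges of G such that G' = G + A is chordal, and C a clique of G'. Then the number of partitions of C into sets that are independent in G is at most (2k)^{2k}. -/

import Mathlib

/-- An induced cycle of length `n` in `G`, given as an injective map `f : Fin n → V`
whose adjacencies are exactly the consecutive pairs along the cycle. -/
def IsInducedCycle {V : Type*} (G : SimpleGraph V) (n : ℕ) (f : Fin n → V) : Prop :=
  Function.Injective f ∧
    ∀ i j : Fin n, G.Adj (f i) (f j) ↔ ((i.val + 1) % n = j.val ∨ (j.val + 1) % n = i.val)

/-- A graph is chordal if it has no induced cycle of length at least `4`. -/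
def IsChordal {V : Type*} (G : SimpleGraph V) : Prop :=
  ∀ n : ℕ, 4 ≤ n → ∀ f : Fin n → V, ¬ IsInducedCycle G n f

/-- Let `H = G + A` be a chordal supergraph of `G` obtained by adding at most `k`
edges, and let `C` be a clique of `H`. Then the number of partitions of `C` into
sets that are independent in `G` is at most `(2k)^(2k)`. -/
theorem stmt7 {V : Type*} [Fintype V] [DecidableEq V] (G H : SimpleGraph V) (k : ℕ)
    (hle : G ≤ H) (hA : (H.edgeSet \ G.edgeSet).ncard ≤ k) (hch : IsChordal H)
    (C : Finset V) (hC : H.IsClique (C : Set V)) :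
    {P : Finpartition C | ∀ p ∈ P.parts,
      (p : Set V).Pairwise fun u v => ¬ G.Adj u v}.ncard ≤ (2 * k) ^ (2 * k) := by
  classical
  letI : LinearOrder V := LinearOrder.lift' (Fintype.equivFin V) (Fintype.equivFin V).injective
  set S : Finset V := C.filter (fun v => ∃ w, H.Adj v w ∧ ¬ G.Adj v w) with hSdef
  have hSC : S ⊆ C := Finset.filter_subset _ _
  -- vertices outside S are G-adjacent to everything else in C
  have hout : ∀ u ∈ C, u ∉ S → ∀ v ∈ C, v ≠ u → G.Adj u v := by
    intro u hu huS v hv hvu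
    have hH : H.Adj u v := hC (Finset.mem_coe.2 hu) (Finset.mem_coe.2 hv) (fun h => hvu h.symm)
    by_contra hG
    exact huS (Finset.mem_filter.2 ⟨hu, ⟨v, hH, hG⟩⟩)
  set Good : Set (Finpartition C) :=
    {P : Finpartition C | ∀ p ∈ P.parts, (p : Set V).Pairwise fun u v => ¬ G.Adj u v} with hGood
  -- singleton lemma
  have hsingle : ∀ P ∈ Good, ∀ u ∈ C, u ∉ S → P.part u = {u} := by
    intro P hP u hu huS
    refine Finset.eq_singleton_iff_unique_mem.2 ⟨P.mem_part hu, fun w hw => ?_⟩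
    by_contra hwu
    have hwC : w ∈ C := P.le (P.part_mem.2 hu) hw
    have : ¬ G.Adj u w := hP _ (P.part_mem.2 hu) (P.mem_part hu) hw (fun h => hwu h.symm)
    exact this (hout u hu huS w hwC hwu)
  -- parts of vertices in S are contained in S
  have hsubS : ∀ P ∈ Good, ∀ v ∈ S, P.part v ⊆ S := by
    intro P hP v hvS w hw
    by_contra hwS
    have hvC : v ∈ C := hSC hvS
    have hwC : w ∈ C := P.le (P.part_mem.2 hvC) hw
    have h1 : P.part w = P.part v := P.part_eq_of_mem (P.part_mem.2 hvC) hw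
    have h2 : P.part w = {w} := hsingle P hP w hwC hwS
    have : v ∈ ({w} : Finset V) := h2 ▸ h1.symm ▸ P.mem_part hvC
    exact hwS (Finset.mem_singleton.1 this ▸ hvS)
  -- the representative map
  have hne : ∀ (P : Finpartition C) (v : V), v ∈ S → (P.part v ∩ S).Nonempty := by
    intro P v hv
    exact ⟨v, Finset.mem_inter.2 ⟨P.mem_part (hSC hv), hv⟩⟩
  set g : Finpartition C → (S → S) := fun P v =>
    ⟨(P.part v.1 ∩ S).min' (hne P v.1 v.2),
      (Finset.mem_inter.1 ((P.part v.1 ∩ S).min'_mem (hne P v.1 v.2))).2⟩ with hg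
  have hgval : ∀ P ∈ Good, ∀ (v : V) (hv : v ∈ S),
      (g P ⟨v, hv⟩ : V) = (P.part v).min' ⟨v, P.mem_part (hSC hv)⟩ := by
    intro P hP v hv
    have : P.part v ∩ S = P.part v := Finset.inter_eq_left.2 (hsubS P hP v hv)
    simp only [hg]
    congr 1
  -- membership criterion
  have hmem : ∀ P ∈ Good, ∀ (v : V) (hv : v ∈ S) (w : V) (hw : w ∈ S),
      w ∈ P.part v ↔ g P ⟨w, hw⟩ = g P ⟨v, hv⟩ := by
    intro P hP v hv w hw
    constructor
    · intro h
      have : P.part w = P.part v := P.part_eq_of_mem (P.part_mem.2 (hSC hv)) h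
      simp only [hg, Subtype.ext_iff, this]
    · intro h
      have h' : ((P.part w ∩ S).min' (hne P w hw)) = ((P.part v ∩ S).min' (hne P v hv)) := by
        simpa [hg, Subtype.ext_iff] using h
      have hm1 := (P.part w ∩ S).min'_mem (hne P w hw)
      have hm2 := (P.part v ∩ S).min'_mem (hne P v hv)
      rw [h'] at hm1
      have : P.part w = P.part v :=
        P.eq_of_mem_parts (P.part_mem.2 (hSC hw)) (P.part_mem.2 (hSC hv))
          (Finset.mem_inter.1 hm1).1 (Finset.mem_inter.1 hm2).1
      exact this ▸ P.mem_part (hSC hw)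
  -- injectivity
  have hinj : Set.InjOn g Good := by
    have key : ∀ P ∈ Good, ∀ Q ∈ Good, g P = g Q → P.parts ⊆ Q.parts := by
      intro P hP Q hQ hgPQ p hp
      obtain ⟨x, hxC, hxp⟩ := P.part_surjOn hp
      by_cases hxS : x ∈ S
      · have : P.part x = Q.part x := by
          ext w
          by_cases hwS : w ∈ S
          · rw [hmem P hP x hxS w hwS, hmem Q hQ x hxS w hwS, hgPQ]
          · constructor
            · intro hw; exact absurd (hsubS P hP x hxS hw) hwS
            · intro hw; exact absurd (hsubS Q hQ x hxS hw) hwS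
        rw [← hxp, this]; exact Q.part_mem.2 hxC
      · rw [← hxp, hsingle P hP x hxC hxS, ← hsingle Q hQ x hxC hxS]
        exact Q.part_mem.2 hxC
    intro P hP Q hQ h
    exact Finpartition.ext (Finset.Subset.antisymm (key P hP Q hQ h) (key Q hQ P hP h.symm))
  -- cardinality of S
  have hScard : S.card ≤ 2 * k := by
    set T : Finset (Sym2 V) := (H.edgeSet \ G.edgeSet).toFinset with hT
    have hTk : T.card ≤ k := by
      rw [hT, ← Set.ncard_eq_toFinset_card']; exact hA
    set f : V → Sym2 V := fun v =>
      if h : ∃ w, H.Adj v w ∧ ¬ G.Adj v w then s(v, h.choose) else s(v, v) with hf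
    have hmemf : ∀ v ∈ S, v ∈ f v ∧ f v ∈ T := by
      intro v hv
      have h : ∃ w, H.Adj v w ∧ ¬ G.Adj v w := (Finset.mem_filter.1 hv).2
      refine ⟨?_, ?_⟩
      · simp [hf, h, Sym2.mem_mk_left]
      · simp only [hf, dif_pos h, hT, Set.mem_toFinset, Set.mem_diff,
          SimpleGraph.mem_edgeSet]
        exact ⟨h.choose_spec.1, h.choose_spec.2⟩
    have h1 : S.card ≤ 2 * (S.image f).card := by
      apply Finset.card_le_mul_card_image
      intro e he
      induction e using Sym2.ind with
      | _ a b =>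
        have hsub : (S.filter fun x => f x = s(a, b)) ⊆ {a, b} := by
          intro x hx
          obtain ⟨hxS, hxe⟩ := Finset.mem_filter.1 hx
          have := (hmemf x hxS).1
          rw [hxe] at this
          rcases Sym2.mem_iff.1 this with h | h <;> simp [h]
        calc (S.filter fun x => f x = s(a, b)).card ≤ ({a, b} : Finset V).card :=
              Finset.card_le_card hsub
          _ ≤ 2 := (Finset.card_insert_le a {b}).trans (by simp)
    have h2 : (S.image f).card ≤ T.card := by
      apply Finset.card_le_card
      intro e he
      obtain ⟨v, hv, rfl⟩ := Finset.mem_image.1 he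
      exact (hmemf v hv).2
    calc S.card ≤ 2 * (S.image f).card := h1
      _ ≤ 2 * T.card := by omega
      _ ≤ 2 * k := by omega
  -- put it together
  have hcard : Good.ncard ≤ S.card ^ S.card := by
    have := Set.ncard_le_ncard_of_injOn g (fun P _ => Set.mem_univ (g P)) hinj Set.finite_univ
    calc Good.ncard ≤ (Set.univ : Set (S → S)).ncard := this
      _ = Fintype.card (S → S) := by rw [Set.ncard_univ, Nat.card_eq_fintype_card]
      _ = S.card ^ S.card := by simp [Fintype.card_fun]
  calc Good.ncard ≤ S.card ^ S.card := hcard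
    _ ≤ (2 * k) ^ S.card := Nat.pow_le_pow_left hScard _
    _ ≤ (2 * k) ^ (2 * k) := by
        rcases Nat.eq_zero_or_pos (2 * k) with h | h
        · have : S.card = 0 := by omega
          simp [this, h]
        · exact Nat.pow_le_pow_right h hScard
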